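/- Let a_1, ..., a_k be positive integers with gcd(a_1, ..., a_k) = 1. Then the state complexity of the unary language {0^{a_1}, ..., 0^{a_k}}* equals g(a_1, ..., a_k) + 2, where g is the Frobenius number. -/

import Mathlib

open Computability

/-- The state complexity of a language: the least number of states of a complete DFA
accepting it. -/
noncomputable def stateComplexity {α : Type} (L : Language α) : ℕ :=
  sInf {n : ℕ | ∃ M : DFA α (Fin n), M.accepts = L}

private lemma unit_list_eq (u v : List Unit) (h : u.length = v.length) : u = v :=
  List.ext_getElem h (fun _ _ _ => rfl)

/-- For positive integers `a 1, …, a k` with gcd 1, the state complexity of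
the unary language `{0^{a 1}, …, 0^{a k}}∗` equals the Frobenius number plus 2. -/
theorem stateComplexity_unary_kstar (k : ℕ) (a : Fin k → ℕ) (ha : ∀ i, 0 < a i)
    (hgcd : Finset.univ.gcd a = 1)
    (g : ℕ) (hg : IsGreatest {n : ℕ | n ∉ AddSubmonoid.closure (Set.range a)} g)
    (S : Language Unit) (hS : S = Set.range (fun i => List.replicate (a i) ())) :
    stateComplexity (S∗) = g + 2 := by
  set C := AddSubmonoid.closure (Set.range a) with hCdef
  have hgC : g ∉ C := hg.1
  have hbig : ∀ m, g < m → m ∈ C := by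
    intro m hm
    by_contra h
    exact absurd (hg.2 h) (by omega)
  -- characterization of membership in S∗
  have hmem : ∀ w : List Unit, w ∈ S∗ ↔ w.length ∈ C := by
    intro w
    rw [Language.mem_kstar]
    constructor
    · rintro ⟨L, rfl, hL⟩
      rw [List.length_flatten]
      apply AddSubmonoid.list_sum_mem
      intro x hx
      simp only [List.mem_map] at hx
      obtain ⟨y, hy, rfl⟩ := hx
      have := hL y hy
      rw [hS] at this
      obtain ⟨i, hi⟩ := this
      rw [← hi]
      simp only [List.length_replicate]
      exact AddSubmonoid.subset_closure (Set.mem_range_self i)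
    · intro hn
      obtain ⟨l, hl, hsum⟩ := AddSubmonoid.exists_list_of_mem_closure hn
      refine ⟨l.map (fun m => List.replicate m ()), ?_, ?_⟩
      · apply unit_list_eq
        rw [List.length_flatten, List.map_map]
        simp only [Function.comp_def, List.length_replicate]
        rw [List.map_id', hsum]
      · intro y hy
        simp only [List.mem_map] at hy
        obtain ⟨m, hm, rfl⟩ := hy
        obtain ⟨i, rfl⟩ := hl m hm
        rw [hS]
        exact ⟨i, rfl⟩
  -- the DFA with g+2 states
  let M : DFA Unit (Fin (g + 2)) :=
    { step := fun q _ => ⟨min (q.val + 1) (g + 1), by omega⟩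
      start := ⟨0, by omega⟩
      accept := {q | (q.val : ℕ) ∈ C} }
  have heval : ∀ n : ℕ, M.eval (List.replicate n ()) = ⟨min n (g + 1), by omega⟩ := by
    intro n
    induction n with
    | zero =>
      simp only [List.replicate_zero]
      exact Fin.ext (by simp [DFA.eval, DFA.evalFrom, M])
    | succ n ih =>
      rw [List.replicate_succ']
      have : M.eval (List.replicate n () ++ [()]) = M.step (M.eval (List.replicate n ())) () := by
        simp [DFA.eval, DFA.evalFrom, List.foldl_append]
      rw [this, ih]
      exact Fin.ext (by simp [M])
  have hacc : M.accepts = S∗ := by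
    ext w
    rw [DFA.mem_accepts, hmem]
    have hw : w = List.replicate w.length () := unit_list_eq _ _ (by simp)
    conv_lhs => rw [hw]
    rw [heval]
    show min w.length (g + 1) ∈ C ↔ w.length ∈ C
    rcases le_or_gt w.length (g + 1) with h | h
    · rw [min_eq_left h]
    · rw [min_eq_right (by omega)]
      constructor
      · intro _; exact hbig _ (by omega)
      · intro _; exact hbig _ (by omega)
  have hub : g + 2 ∈ {n : ℕ | ∃ M : DFA Unit (Fin n), M.accepts = S∗} := ⟨M, hacc⟩
  have hlb : ∀ m ∈ {n : ℕ | ∃ M : DFA Unit (Fin n), M.accepts = S∗}, g + 2 ≤ m := by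
    rintro m ⟨N, hN⟩
    by_contra hcon
    push_neg at hcon
    have hcard : Fintype.card (Fin m) < Fintype.card (Fin (g + 2)) := by simp; omega
    obtain ⟨i, j, hne, hf⟩ :=
      Fintype.exists_ne_map_eq_of_card_lt (fun i : Fin (g + 2) => N.eval (List.replicate i.val ())) hcard
    -- wlog i < j
    have hvne : i.val ≠ j.val := fun h => hne (Fin.ext h)
    wlog hij : i.val < j.val generalizing i j
    · exact this j i (Ne.symm hne) hf.symm (fun h => hne (Fin.ext h.symm)) (by omega)
    · have ht : i.val + (g - i.val) = g := by omega
      have key : N.eval (List.replicate (i.val + (g - i.val)) ()) =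
          N.eval (List.replicate (j.val + (g - i.val)) ()) := by
        rw [List.replicate_add, List.replicate_add]
        simp only [DFA.eval, DFA.evalFrom, List.foldl_append]
        rw [show List.foldl N.step N.start (List.replicate i.val ()) = N.eval (List.replicate i.val ()) from rfl,
          show List.foldl N.step N.start (List.replicate j.val ()) = N.eval (List.replicate j.val ()) from rfl,
          hf]
      have h1 : List.replicate (i.val + (g - i.val)) () ∉ N.accepts := by
        rw [hN, hmem]
        simpa [ht] using hgC
      have h2 : List.replicate (j.val + (g - i.val)) () ∈ N.accepts := by
        rw [hN, hmem]
        simp only [List.length_replicate]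
        exact hbig _ (by omega)
      rw [DFA.mem_accepts] at h1 h2
      rw [key] at h1
      exact h1 h2
  show sInf {n : ℕ | ∃ M : DFA Unit (Fin n), M.accepts = S∗} = g + 2
  exact le_antisymm (Nat.sInf_le hub) (le_csInf ⟨_, hub⟩ hlb)
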